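/- Let d ≥ 1, y ∈ {−1, +1}, μ ∈ ℝ^d, σ_1,…,σ_d > 0, ε ≥ 0, and let P be the product probability measure on ℝ^d whose coordinates are independent with X_j ~ N(y·μ_j, σ_j²). Then for any nonzero w ∈ ℝ^d, the probability under P that y·∑_{j=1}^d w_j X_j − ε·‖w‖₁ > 0 (equivalently, that the linear classifier f_w(x) = sign(wᵀx) is robustly correct against all ℓ∞-perturbations of size ε) equals Ψ( (∑_{j=1}^d w_j μ_j − ε·‖w‖₁) / sqrt(∑_{j=1}^d w_j² σ_j²) ). (Adversarial accuracy of the linear classifier f_w in the fading Gaussian model.) -/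

import Mathlib

open Finset MeasureTheory ProbabilityTheory

/-- Ψ : the cumulative distribution function of the standard Gaussian `N(0,1)`. -/
noncomputable def stdGaussCDF (a : ℝ) : ℝ :=
  ∫ t in Set.Iic a, (Real.sqrt (2 * Real.pi))⁻¹ * Real.exp (-t ^ 2 / 2)

open Real NNReal ENNReal

lemma pdf_conv (m1 m2 : ℝ) (v1 v2 : ℝ≥0) (h1 : v1 ≠ 0) (h2 : v2 ≠ 0) (u x : ℝ) :
    gaussianPDFReal m1 v1 x * gaussianPDFReal m2 v2 (u - x)
      = gaussianPDFReal (m1 + m2) (v1 + v2) u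
        * gaussianPDFReal (m1 + v1 * (u - m1 - m2) / (v1 + v2)) (v1 * v2 / (v1 + v2)) x := by
  have hA : (0:ℝ) < v1 := lt_of_le_of_ne v1.coe_nonneg (by exact_mod_cast (Ne.symm h1))
  have hB : (0:ℝ) < v2 := lt_of_le_of_ne v2.coe_nonneg (by exact_mod_cast (Ne.symm h2))
  have hAB : (0:ℝ) < (v1:ℝ) + v2 := by linarith
  have hcoe : ((v1 * v2 / (v1 + v2) : ℝ≥0) : ℝ) = (v1:ℝ) * v2 / ((v1:ℝ) + v2) := by
    push_cast; ring
  unfold gaussianPDFReal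
  push_cast [hcoe]
  rw [mul_mul_mul_comm, ← Real.exp_add, mul_mul_mul_comm, ← Real.exp_add,
    ← mul_inv, ← mul_inv, ← Real.sqrt_mul (by positivity), ← Real.sqrt_mul (by positivity)]
  have hpre : 2 * π * ↑v1 * (2 * π * ↑v2)
      = 2 * π * (↑v1 + ↑v2) * (2 * π * ((v1:ℝ) * v2 / ((v1:ℝ) + v2))) := by
    field_simp
  rw [hpre]
  congr 1
  have h2A : (2:ℝ) * v1 ≠ 0 := by positivity
  have h2B : (2:ℝ) * v2 ≠ 0 := by positivity
  congr 1
  field_simp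
  ring

lemma gauss_conv (m1 m2 : ℝ) (v1 v2 : ℝ≥0) :
    ((gaussianReal m1 v1).prod (gaussianReal m2 v2)).map (fun p : ℝ × ℝ => p.1 + p.2)
      = gaussianReal (m1 + m2) (v1 + v2) := by
  by_cases h1 : v1 = 0
  · subst h1
    rw [gaussianReal_zero_var, Measure.dirac_prod, zero_add,
      Measure.map_map measurable_add (measurable_prodMk_left)]
    have : ((fun p : ℝ × ℝ => p.1 + p.2) ∘ Prod.mk m1) = (fun x => m1 + x) := rfl
    rw [this, gaussianReal_map_const_add, add_comm m2 m1]
  by_cases h2 : v2 = 0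
  · subst h2
    rw [gaussianReal_zero_var, Measure.prod_dirac, add_zero,
      Measure.map_map measurable_add (measurable_prodMk_right)]
    have : ((fun p : ℝ × ℝ => p.1 + p.2) ∘ (fun x => (x, m2))) = (fun x => x + m2) := rfl
    rw [this, gaussianReal_map_add_const]
  -- main case
  have hv : v1 + v2 ≠ 0 := by simp [h1]
  set v' : ℝ≥0 := v1 * v2 / (v1 + v2) with hv'
  have hv'0 : v' ≠ 0 := by
    simp [hv', _root_.div_eq_zero_iff, h1, h2, hv]
  ext s hs
  rw [Measure.map_apply measurable_add hs]
  have hAs : MeasurableSet ((fun p : ℝ × ℝ => p.1 + p.2) ⁻¹' s) := measurable_add hs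
  rw [Measure.prod_apply hAs]
  -- rewrite inner measure as lintegral of density
  have hinner : ∀ x : ℝ, (gaussianReal m2 v2) (Prod.mk x ⁻¹' ((fun p : ℝ × ℝ => p.1 + p.2) ⁻¹' s))
      = ∫⁻ t, gaussianPDF m2 v2 t * s.indicator (fun _ => (1:ℝ≥0∞)) (x + t) := by
    intro x
    rw [gaussianReal_of_var_ne_zero _ h2, withDensity_apply _ (measurable_prodMk_left hAs),
      ← lintegral_indicator (measurable_prodMk_left hAs) _]
    congr 1 with t
    by_cases ht : x + t ∈ s <;>
      simp [Set.indicator_apply, ht, Set.mem_preimage]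
  simp_rw [hinner]
  rw [gaussianReal_of_var_ne_zero _ h1,
    lintegral_withDensity_eq_lintegral_mul _ (measurable_gaussianPDF _ _)
      (by
        have : Measurable fun x => (gaussianReal m2 v2) (Prod.mk x ⁻¹' ((fun p : ℝ × ℝ => p.1 + p.2) ⁻¹' s)) :=
          measurable_measure_prodMk_left hAs
        simpa [hinner] using this)]
  -- translate the inner integral
  have htrans : ∀ x : ℝ, (∫⁻ t, gaussianPDF m2 v2 t * s.indicator (fun _ => (1:ℝ≥0∞)) (x + t))
      = ∫⁻ u, gaussianPDF m2 v2 (u - x) * s.indicator (fun _ => (1:ℝ≥0∞)) u := by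
    intro x
    have := lintegral_add_right_eq_self
      (μ := (volume : Measure ℝ))
      (fun u => gaussianPDF m2 v2 (u - x) * s.indicator (fun _ => (1:ℝ≥0∞)) u) x
    rw [← this]
    congr 1 with t
    simp [add_comm]
  simp_rw [Pi.mul_apply, htrans]
  have hpull : ∀ a : ℝ, gaussianPDF m1 v1 a
      * (∫⁻ u, gaussianPDF m2 v2 (u - a) * s.indicator (fun _ => (1:ℝ≥0∞)) u)
      = ∫⁻ u, gaussianPDF m1 v1 a * (gaussianPDF m2 v2 (u - a) * s.indicator (fun _ => (1:ℝ≥0∞)) u) := by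
    intro a
    rw [lintegral_const_mul]
    exact ((measurable_gaussianPDF m2 v2).comp (measurable_id.sub measurable_const)).mul
      (measurable_const.indicator hs)
  simp_rw [hpull]
  rw [lintegral_lintegral_swap]
  · have hpt : ∀ u x : ℝ, gaussianPDF m1 v1 x * (gaussianPDF m2 v2 (u - x) * s.indicator (fun _ => (1:ℝ≥0∞)) u)
        = s.indicator (fun _ => (1:ℝ≥0∞)) u * (ENNReal.ofReal (gaussianPDFReal (m1+m2) (v1+v2) u)
            * gaussianPDF (m1 + v1 * (u - m1 - m2) / (v1 + v2)) v' x) := by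
      intro u x
      rw [gaussianPDF, gaussianPDF, gaussianPDF, ← mul_assoc,
        ← ENNReal.ofReal_mul (gaussianPDFReal_nonneg _ _ _),
        pdf_conv m1 m2 v1 v2 h1 h2 u x,
        ENNReal.ofReal_mul (gaussianPDFReal_nonneg _ _ _)]
      ring
    simp_rw [hpt]
    rw [show (fun u => ∫⁻ x, s.indicator (fun _ => (1:ℝ≥0∞)) u
        * (ENNReal.ofReal (gaussianPDFReal (m1+m2) (v1+v2) u)
          * gaussianPDF (m1 + v1 * (u - m1 - m2) / (v1+v2)) v' x))
      = (fun u => s.indicator (fun _ => (1:ℝ≥0∞)) u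
        * (ENNReal.ofReal (gaussianPDFReal (m1+m2) (v1+v2) u)
          * ∫⁻ x, gaussianPDF (m1 + v1 * (u - m1 - m2) / (v1+v2)) v' x)) from ?_]
    · simp_rw [lintegral_gaussianPDF_eq_one _ hv'0, mul_one]
      rw [gaussianReal_of_var_ne_zero _ hv, withDensity_apply _ hs,
        ← lintegral_indicator hs _]
      congr 1 with u
      by_cases hu : u ∈ s <;> simp [Set.indicator_apply, hu, gaussianPDF]
    · funext u
      rw [lintegral_const_mul _ ((measurable_gaussianPDF _ _).const_mul _),
        lintegral_const_mul _ (measurable_gaussianPDF _ _)]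
  · apply Measurable.aemeasurable
    apply Measurable.mul
    · exact (measurable_gaussianPDF m1 v1).comp measurable_fst
    · apply Measurable.mul
      · exact (measurable_gaussianPDF m2 v2).comp (measurable_snd.sub measurable_fst)
      · exact (measurable_const.indicator hs).comp measurable_snd

lemma pi_gauss_sum : ∀ (n : ℕ) (m : Fin n → ℝ) (v : Fin n → ℝ≥0),
    (Measure.pi fun j => gaussianReal (m j) (v j)).map (fun x => ∑ j, x j)
      = gaussianReal (∑ j, m j) (∑ j, v j) := by
  intro n
  induction n with
  | zero =>
    intro m v
    have : (fun x : Fin 0 → ℝ => ∑ j, x j) = fun _ => (0:ℝ) := by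
      funext x; simp
    rw [this, Measure.map_const]
    simp [gaussianReal_zero_var]
  | succ n ih =>
    intro m v
    have hmp := measurePreserving_piFinSuccAbove (fun j => gaussianReal (m j) (v j)) 0
    set e := MeasurableEquiv.piFinSuccAbove (fun _ : Fin (n+1) => ℝ) 0
    have hsum : (fun x : Fin (n+1) → ℝ => ∑ j, x j)
        = (fun p : ℝ × (Fin n → ℝ) => p.1 + ∑ j, p.2 j) ∘ e := by
      funext x
      simp only [Function.comp_apply, e, MeasurableEquiv.piFinSuccAbove_apply]
      rw [Fin.sum_univ_succ]
      simp [Fin.succAbove, Fin.tail]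
    rw [hsum, ← Measure.map_map (by fun_prop) e.measurable, hmp.map_eq]
    have hsplit : (fun p : ℝ × (Fin n → ℝ) => p.1 + ∑ j, p.2 j)
        = (fun p : ℝ × ℝ => p.1 + p.2) ∘ (Prod.map id (fun t : Fin n → ℝ => ∑ j, t j)) := by
      funext p; rfl
    rw [hsplit, ← Measure.map_map measurable_add (measurable_id.prodMap (by fun_prop)),
      ← Measure.map_prod_map _ _ measurable_id (by fun_prop), Measure.map_id,
      ih _ _, gauss_conv, Fin.sum_univ_succ (f := m), Fin.sum_univ_succ (f := v)]
    congr 1 <;> · congr 1; ext j; simp [Fin.succAbove]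

lemma pi_gauss_lin (n : ℕ) (c m : Fin n → ℝ) (v : Fin n → ℝ≥0) :
    (Measure.pi fun j => gaussianReal (m j) (v j)).map (fun x => ∑ j, c j * x j)
      = gaussianReal (∑ j, c j * m j) (∑ j, (⟨(c j)^2, sq_nonneg _⟩ * v j : ℝ≥0)) := by
  have hmp : MeasurePreserving (fun (x : Fin n → ℝ) j => c j * x j)
      (Measure.pi fun j => gaussianReal (m j) (v j))
      (Measure.pi fun j => gaussianReal (c j * m j) ((⟨(c j)^2, sq_nonneg _⟩ * v j : ℝ≥0))) :=
    measurePreserving_pi _ _ (fun j => ⟨measurable_const_mul _, gaussianReal_map_const_mul _⟩)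
  have : (fun x : Fin n → ℝ => ∑ j, c j * x j)
      = (fun x : Fin n → ℝ => ∑ j, x j) ∘ (fun x j => c j * x j) := rfl
  rw [this, ← Measure.map_map (by fun_prop) hmp.measurable, hmp.map_eq, pi_gauss_sum]


lemma gauss_Ioi (M b : ℝ) (V : ℝ≥0) (hV : V ≠ 0) :
    ((gaussianReal M V) (Set.Ioi b)).toReal = stdGaussCDF ((M - b) / Real.sqrt V) := by
  have hVpos : (0:ℝ) < V := lt_of_le_of_ne V.coe_nonneg (by exact_mod_cast (Ne.symm hV))
  set k : ℝ := (Real.sqrt V)⁻¹ with hkdef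
  have hk : 0 < k := by positivity
  set a : ℝ := (M - b) * k with hadef
  have hmap : (gaussianReal M V).map (fun z => (M - z) * k) = gaussianReal 0 1 := by
    have hfun : (fun z : ℝ => (M - z) * k) = (· + M * k) ∘ (fun z => (-k) * z) := by
      funext z; simp [Function.comp]; ring
    rw [hfun, ← Measure.map_map (measurable_add_const _) (measurable_const_mul _),
      gaussianReal_map_const_mul, gaussianReal_map_add_const]
    have hv1 : (⟨(-k)^2, sq_nonneg _⟩ * V : ℝ≥0) = 1 := by
      ext
      push_cast
      show (-k)^2 * (V:ℝ) = 1
      rw [hkdef, neg_pow, inv_pow, Real.sq_sqrt V.coe_nonneg]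
      field_simp
    rw [show NNReal.mk ((-k) ^ 2) (sq_nonneg _) * V = 1 from hv1, show -k * M + M * k = 0 by ring]
  have hpre : (fun z : ℝ => (M - z) * k) ⁻¹' (Set.Iio a) = Set.Ioi b := by
    ext z
    simp only [Set.mem_preimage, Set.mem_Iio, Set.mem_Ioi, hadef]
    rw [mul_lt_mul_iff_of_pos_right hk]
    constructor <;> intro h <;> linarith
  have h1 : (gaussianReal M V) (Set.Ioi b) = gaussianReal 0 1 (Set.Iio a) := by
    rw [← hmap, Measure.map_apply (by fun_prop) measurableSet_Iio, hpre]
  have hsing : gaussianReal 0 1 {a} = 0 := by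
    rw [gaussianReal_apply _ one_ne_zero,
      Measure.restrict_eq_zero.mpr (by simp), lintegral_zero_measure]
  have h2 : gaussianReal 0 1 (Set.Iio a) = gaussianReal 0 1 (Set.Iic a) := by
    rw [← Set.Iio_union_right, measure_union (Set.disjoint_singleton_right.mpr (by simp))
      (measurableSet_singleton a), hsing, add_zero]
  have ha2 : (M - b) / Real.sqrt V = a := by rw [hadef, hkdef]; ring
  rw [h1, h2, gaussianReal_apply_eq_integral _ one_ne_zero,
    ENNReal.toReal_ofReal (integral_nonneg (fun x => gaussianPDFReal_nonneg _ _ _))]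
  unfold stdGaussCDF
  rw [ha2]
  congr 1 with t
  unfold gaussianPDFReal
  norm_num

/-- Adversarial accuracy of the linear classifier `f_w` in the fading Gaussian model:
if `X_j ~ N(y μ_j, σ_j²)` independently, then
`P(y·wᵀX − ε‖w‖₁ > 0) = Ψ((wᵀμ − ε‖w‖₁) / sqrt(∑ w_j² σ_j²))`. -/
theorem stmt_8 (d : ℕ) (hd : 1 ≤ d) (y : ℝ) (hy : y = 1 ∨ y = -1)
    (μ : Fin d → ℝ) (σ : Fin d → ℝ) (hσ : ∀ j, 0 < σ j)
    (ε : ℝ) (hε : 0 ≤ ε)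
    (w : Fin d → ℝ) (hw : w ≠ 0) :
    ((Measure.pi fun j => gaussianReal (y * μ j) (⟨(σ j) ^ 2, sq_nonneg _⟩ : NNReal))
        {x : Fin d → ℝ | 0 < y * (∑ j, w j * x j) - ε * ∑ j, |w j|}).toReal
      = stdGaussCDF (((∑ j, w j * μ j) - ε * ∑ j, |w j|)
          / Real.sqrt (∑ j, w j ^ 2 * (σ j) ^ 2)) := by
  have hy2 : y * y = 1 := by rcases hy with h | h <;> rw [h] <;> norm_num
  have hy0 : y ≠ 0 := by rcases hy with h | h <;> rw [h] <;> norm_num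
  set c : Fin d → ℝ := fun j => y * w j with hc
  set b : ℝ := ε * ∑ j, |w j| with hb
  have hset : {x : Fin d → ℝ | 0 < y * (∑ j, w j * x j) - ε * ∑ j, |w j|}
      = (fun x : Fin d → ℝ => ∑ j, c j * x j) ⁻¹' Set.Ioi b := by
    ext x
    simp only [Set.mem_setOf_eq, Set.mem_preimage, Set.mem_Ioi, hb, hc]
    rw [show (∑ j, y * w j * x j) = y * ∑ j, w j * x j by rw [Finset.mul_sum]; exact Finset.sum_congr rfl fun j _ => by ring]
    constructor <;> intro h <;> linarith
  have hmeas : Measurable (fun x : Fin d → ℝ => ∑ j, c j * x j) := by fun_prop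
  rw [hset, ← Measure.map_apply hmeas measurableSet_Ioi,
    pi_gauss_lin d c (fun j => y * μ j) (fun j => ⟨(σ j)^2, sq_nonneg _⟩)]
  set V : ℝ≥0 := ∑ j, (⟨(c j)^2, sq_nonneg _⟩ * ⟨(σ j)^2, sq_nonneg _⟩ : ℝ≥0) with hV
  have hVc : (V : ℝ) = ∑ j, w j ^ 2 * σ j ^ 2 := by
    rw [hV]
    push_cast
    refine Finset.sum_congr rfl fun j _ => ?_
    show (y * w j)^2 * (σ j)^2 = w j ^2 * σ j ^2
    rw [mul_pow]
    rw [show y^2 = 1 by rw [sq, hy2]]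
    ring
  have hVne : V ≠ 0 := by
    obtain ⟨j0, hj0⟩ := Function.ne_iff.mp hw
    intro h0
    have : (V:ℝ) = 0 := by rw [h0]; simp
    rw [hVc] at this
    have hle : ∀ j ∈ Finset.univ, (0:ℝ) ≤ w j ^ 2 * σ j ^ 2 := fun j _ => by positivity
    have := (Finset.sum_eq_zero_iff_of_nonneg hle).mp this j0 (Finset.mem_univ _)
    have hσ0 := hσ j0
    have hw0 : w j0 ≠ 0 := by simpa using hj0
    have h1 : 0 < w j0 ^ 2 := by positivity
    have h2 : 0 < σ j0 ^ 2 := by positivity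
    nlinarith
  have hM : (∑ j, c j * (y * μ j)) = ∑ j, w j * μ j :=
    Finset.sum_congr rfl fun j _ => by
      show y * w j * (y * μ j) = w j * μ j
      rw [show y * w j * (y * μ j) = (y * y) * (w j * μ j) by ring, hy2, one_mul]
  rw [gauss_Ioi _ _ _ hVne, hVc, hM]
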